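/- arXiv:2401.07351 — 8 statements merged into one kernel-verified Lean document; each statement's English description precedes it below -/
import Mathlib

section
/- Let N > 6 be a composite positive integer. Then there exists a base b with 2 ≤ b ≤ N − 2 such that N is palindromic in base b. Equivalently (Brown's theorem): if N ≥ 2 and N is not palindromic in any base b with 2 ≤ b < N − 1, then N ∈ {3, 4, 6} or N is prime. -/
lemma digits_pal_two (b c : ℕ) (hb : 1 < b) (hc : 0 < c) (hcb : c < b) :
    Nat.digits b (c * b + c) = [c, c] := by
  rw [Nat.digits_def' hb (by positivity)]
  have h1 : (c * b + c) % b = c := by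
    rw [show c * b + c = c + b * c from by ring, Nat.add_mul_mod_self_left,
      Nat.mod_eq_of_lt hcb]
  have h2 : (c * b + c) / b = c := by
    rw [show c * b + c = c + b * c from by ring, Nat.add_mul_div_left _ _ (by omega : 0 < b),
      Nat.div_eq_of_lt hcb, Nat.zero_add]
  rw [h1, h2, Nat.digits_def' hb hc, Nat.mod_eq_of_lt hcb, Nat.div_eq_of_lt hcb,
    Nat.digits_zero]

lemma digits_pal_sq (b : ℕ) (hb : 2 < b) :
    Nat.digits b (b * b + 2 * b + 1) = [1, 2, 1] := by
  have hb1 : 1 < b := by omega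
  rw [Nat.digits_def' hb1 (by positivity)]
  have h1 : (b * b + 2 * b + 1) % b = 1 := by
    rw [show b * b + 2 * b + 1 = 1 + b * (b + 2) from by ring, Nat.add_mul_mod_self_left,
      Nat.mod_eq_of_lt hb1]
  have h2 : (b * b + 2 * b + 1) / b = b + 2 := by
    rw [show b * b + 2 * b + 1 = 1 + b * (b + 2) from by ring,
      Nat.add_mul_div_left _ _ (by omega : 0 < b), Nat.div_eq_of_lt hb1, Nat.zero_add]
  rw [h1, h2, Nat.digits_def' hb1 (by omega)]
  have h3 : (b + 2) % b = 2 := by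
    rw [Nat.add_mod_left, Nat.mod_eq_of_lt hb]
  have h4 : (b + 2) / b = 1 := by
    rw [Nat.add_div_left _ (by omega : 0 < b), Nat.div_eq_of_lt hb]
  rw [h3, h4, Nat.digits_def' hb1 (by omega), Nat.mod_eq_of_lt hb1,
    Nat.div_eq_of_lt hb1, Nat.digits_zero]

/-- Brown's theorem: if `N ≥ 2` is not palindromic in any base `b` with
`2 ≤ b < N - 1`, then `N ∈ {3, 4, 6}` or `N` is prime. -/
theorem brown_min_base (N : ℕ) (hN : 2 ≤ N)
    (h : ∀ b : ℕ, 2 ≤ b → b < N - 1 → ¬ List.Palindrome (Nat.digits b N)) :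
    N = 3 ∨ N = 4 ∨ N = 6 ∨ N.Prime := by
  by_contra hcon
  push_neg at hcon
  obtain ⟨h3, h4, h6, hp⟩ := hcon
  have hne2 : N ≠ 2 := fun e => hp (e ▸ Nat.prime_two)
  have hne5 : N ≠ 5 := fun e => hp (e ▸ by norm_num)
  have hne7 : N ≠ 7 := fun e => hp (e ▸ by norm_num)
  have hN8 : 8 ≤ N := by omega
  obtain ⟨c, d, hcp, hcd2, hcled, hmin⟩ :
      ∃ c d : ℕ, c.Prime ∧ c * d = N ∧ c ≤ d ∧ ∀ m, 2 ≤ m → m ∣ N → c ≤ m :=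
    ⟨N.minFac, N / N.minFac, Nat.minFac_prime (by omega),
      Nat.mul_div_cancel' (Nat.minFac_dvd N), Nat.minFac_le_div (by omega) hp,
      fun m hm hd => Nat.minFac_le_of_dvd hm hd⟩
  have hc2 : 2 ≤ c := hcp.two_le
  have hd3 : 3 ≤ d := by nlinarith
  rcases lt_or_ge c (d - 1) with hlt | hge
  · -- c ≤ d - 2 : base d - 1, digits [c, c]
    obtain ⟨b, rfl⟩ : ∃ b, d = b + 1 := ⟨d - 1, by omega⟩
    have hdN : b + 1 < N := by nlinarith
    apply h b (by omega) (by omega)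
    have hNe : N = c * b + c := by rw [← hcd2]; ring
    rw [hNe, digits_pal_two b c (by omega) (by omega) (by omega)]
    exact List.Palindrome.of_reverse_eq (by simp)
  · rcases lt_or_ge c d with hlt2 | hge2
    · -- d = c + 1 : impossible
      have hdc1 : d = c + 1 := by omega
      rcases eq_or_lt_of_le hc2 with hc2' | hc3
      · have hcc : c = 2 := hc2'.symm
        have hdd : d = 3 := by omega
        have : N = 6 := by rw [← hcd2, hcc, hdd]
        exact h6 this
      · have hodd : Odd c := hcp.odd_of_ne_two (by omega)
        obtain ⟨k, hk⟩ := hodd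
        have h2N : 2 ∣ N := by
          rw [← hcd2]
          exact Dvd.dvd.mul_left ⟨k + 1, by omega⟩ c
        have := hmin 2 (le_refl 2) h2N
        omega
    · -- c = d, N = c²
      have hcd' : c = d := le_antisymm hcled hge2
      have hNsq : N = c * c := by rw [← hcd2, hcd']
      rcases eq_or_lt_of_le hd3 with hd3' | hd4
      · -- c = 3, N = 9, base 2
        have hN9 : N = 9 := by rw [hNsq, hcd', ← hd3']
        apply h 2 (le_refl 2) (by omega)
        rw [hN9, show Nat.digits 2 9 = [1, 0, 0, 1] from by norm_num]
        exact List.Palindrome.of_reverse_eq (by simp)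
      · -- c ≥ 4, base c - 1, digits [1,2,1]
        obtain ⟨b, rfl⟩ : ∃ b, c = b + 1 := ⟨c - 1, by omega⟩
        have hcN : b + 1 < N := by nlinarith
        apply h b (by omega) (by omega)
        have hNe : N = b * b + 2 * b + 1 := by rw [hNsq]; ring
        rw [hNe, digits_pal_sq b (by omega)]
        exact List.Palindrome.of_reverse_eq (by simp)
end

section
/- Let b ≥ 2, k ≥ 0 and α ≥ 1 be integers with α · C(k, ⌈k/2⌉) < b, where C denotes the binomial coefficient. Then the base-b digit list of N = α·(1+b)^k is [α·C(k,0), α·C(k,1), ..., α·C(k,k)] (little-endian), i.e., N has the binomial-form representation α·(C(k,k), ..., C(k,1), C(k,0)) in base b; in particular N is palindromic in base b. -/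
lemma ofDigits_map_range (b : ℕ) (f : ℕ → ℕ) :
    ∀ n, Nat.ofDigits b ((List.range n).map f)
      = ∑ i ∈ Finset.range n, f i * b ^ i := by
  intro n
  induction n with
  | zero => simp
  | succ n ih =>
      rw [List.range_succ, List.map_append, Nat.ofDigits_append, ih,
        Finset.sum_range_succ]
      simp [mul_comm]

/-- If `α * C(k, ⌈k/2⌉) < b` (with `b ≥ 2`, `α ≥ 1`), then the base-`b` digit
list of `N = α * (1 + b) ^ k` is `[α*C(k,0), α*C(k,1), ..., α*C(k,k)]`
(little-endian); in particular `N` is palindromic in base `b`. -/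
theorem binomial_form_digits (b k α : ℕ) (hb : 2 ≤ b) (hα : 1 ≤ α)
    (h : α * Nat.choose k ((k + 1) / 2) < b) :
    Nat.digits b (α * (1 + b) ^ k)
        = (List.range (k + 1)).map (fun i => α * Nat.choose k i) ∧
      List.Palindrome (Nat.digits b (α * (1 + b) ^ k)) := by
  have hmid : ∀ i, Nat.choose k i ≤ Nat.choose k ((k + 1) / 2) := by
    intro i
    have h1 : Nat.choose k ((k + 1) / 2) = Nat.choose k (k / 2) := by
      have : k - (k + 1) / 2 = k / 2 := by omega
      rw [← Nat.choose_symm (by omega : (k+1)/2 ≤ k), this]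
    rw [h1]
    exact Nat.choose_le_middle i k
  have hlt : ∀ i, α * Nat.choose k i < b := fun i =>
    lt_of_le_of_lt (Nat.mul_le_mul_left α (hmid i)) h
  have hval : Nat.ofDigits b ((List.range (k + 1)).map (fun i => α * Nat.choose k i))
      = α * (1 + b) ^ k := by
    rw [ofDigits_map_range, add_comm 1 b, add_pow, Finset.mul_sum]
    apply Finset.sum_congr rfl
    intro i _
    simp [one_pow]
    ring
  have hdig : Nat.digits b (α * (1 + b) ^ k)
      = (List.range (k + 1)).map (fun i => α * Nat.choose k i) := by
    rw [← hval]
    apply Nat.digits_ofDigits b (by omega)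
    · intro l hl
      simp only [List.mem_map, List.mem_range] at hl
      obtain ⟨i, _, rfl⟩ := hl
      exact hlt i
    · intro hne
      rw [List.getLast_eq_getElem]
      simp only [List.getElem_map, List.length_map, List.length_range, List.getElem_range]
      simp
      omega
  refine ⟨hdig, ?_⟩
  rw [hdig]
  apply List.Palindrome.of_reverse_eq
  apply List.ext_getElem
  · simp
  · intro i h1 h2
    simp only [List.length_reverse, List.length_map, List.length_range] at h1
    simp only [List.getElem_reverse, List.getElem_map, List.getElem_range,
      List.length_map, List.length_range]
    congr 1
    rw [← Nat.choose_symm (by omega : k + 1 - 1 - i ≤ k)]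
    congr 1
    omega
end

section
/- Let n, x, k, r be integers with n = x·k + r, r ≥ 0, x ≥ 2, and 2^r · C(k, ⌈k/2⌉) < 2^x − 1. Then the base-(2^x − 1) digit list of 2^n is [2^r·C(k,0), 2^r·C(k,1), ..., 2^r·C(k,k)]; in particular 2^n has a binomial-form (hence palindromic) representation in base 2^x − 1. -/
lemma ofDigits_range_map (b : ℕ) (f : ℕ → ℕ) (m : ℕ) :
    Nat.ofDigits b ((List.range m).map f) = ∑ i ∈ Finset.range m, f i * b ^ i := by
  induction m with
  | zero => simp [Nat.ofDigits]
  | succ m ih =>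
      rw [List.range_succ, List.map_append, Nat.ofDigits_append, ih,
        Finset.sum_range_succ]
      simp [Nat.ofDigits, mul_comm]

lemma choose_le_mid (k i : ℕ) : Nat.choose k i ≤ Nat.choose k ((k + 1) / 2) := by
  have h1 : k - (k + 1) / 2 = k / 2 := by omega
  have h2 : Nat.choose k ((k + 1) / 2) = Nat.choose k (k / 2) := by
    rw [← h1, Nat.choose_symm (by omega)]
  rw [h2]
  exact Nat.choose_le_middle i k

/-- If `n = x*k + r` with `x ≥ 2` and `2^r * C(k, ⌈k/2⌉) < 2^x - 1`, then the
base-`(2^x - 1)` digit list of `2^n` is `[2^r*C(k,0), ..., 2^r*C(k,k)]`;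
in particular `2^n` has a binomial-form (hence palindromic) representation
in base `2^x - 1`. -/
theorem pow_two_binomial_form (n x k r : ℕ) (hx : 2 ≤ x) (hn : n = x * k + r)
    (h : 2 ^ r * Nat.choose k ((k + 1) / 2) < 2 ^ x - 1) :
    Nat.digits (2 ^ x - 1) (2 ^ n)
        = (List.range (k + 1)).map (fun i => 2 ^ r * Nat.choose k i) ∧
      List.Palindrome (Nat.digits (2 ^ x - 1) (2 ^ n)) := by
  set b := 2 ^ x - 1 with hb
  have hx4 : 4 ≤ 2 ^ x := by
    calc (4 : ℕ) = 2 ^ 2 := by norm_num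
    _ ≤ 2 ^ x := Nat.pow_le_pow_right (by norm_num) hx
  have hb1 : 1 < b := by omega
  have hbsucc : b + 1 = 2 ^ x := by omega
  set L := (List.range (k + 1)).map (fun i => 2 ^ r * Nat.choose k i) with hL
  have hpow : ∑ i ∈ Finset.range (k + 1), b ^ i * Nat.choose k i = (b + 1) ^ k := by
    rw [add_pow]; simp
  have hsum : Nat.ofDigits b L = 2 ^ n := by
    rw [hL, ofDigits_range_map]
    have : ∑ i ∈ Finset.range (k + 1), 2 ^ r * Nat.choose k i * b ^ i
        = 2 ^ r * ∑ i ∈ Finset.range (k + 1), b ^ i * Nat.choose k i := by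
      rw [Finset.mul_sum]; apply Finset.sum_congr rfl; intro i _; ring
    rw [this, hpow, hbsucc, ← pow_mul, ← pow_add, hn]
    ring_nf
  have hlt : ∀ l ∈ L, l < b := by
    intro l hl
    rw [hL] at hl
    simp only [List.mem_map, List.mem_range] at hl
    obtain ⟨i, _, rfl⟩ := hl
    calc 2 ^ r * Nat.choose k i ≤ 2 ^ r * Nat.choose k ((k + 1) / 2) :=
          Nat.mul_le_mul_left _ (choose_le_mid k i)
      _ < b := h
  have hlast : ∀ (hne : L ≠ []), L.getLast hne ≠ 0 := by
    intro hne
    have hlen : L.length = k + 1 := by simp [hL]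
    rw [List.getLast_eq_getElem]
    have : L[L.length - 1] = 2 ^ r * Nat.choose k k := by simp [hL, hlen]
    rw [this]
    simp [Nat.choose_self]
  have hd : Nat.digits b (2 ^ n) = L := by
    rw [← hsum]
    exact Nat.digits_ofDigits b hb1 L hlt hlast
  refine ⟨hd, ?_⟩
  rw [hd, hL]
  apply List.Palindrome.of_reverse_eq
  apply List.ext_getElem
  · simp
  · intro i h1 h2
    have hik : i < k + 1 := by simpa using h2
    simp only [List.getElem_reverse, List.getElem_map, List.getElem_range,
      List.length_reverse, List.length_map, List.length_range]
    congr 1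
    have he : k + 1 - 1 - i = k - i := by omega
    rw [he, Nat.choose_symm (by omega)]
end

section
/- Let b ≥ 2 and n ≥ 0 be integers. If the base-b digit list of 2^n is a palindrome with an even number of digits, then b = 2^x − 1 for some integer x. -/
lemma ofDigits_cons' {R : Type*} [CommRing R] (r : R) (x : ℕ) (l : List ℕ) :
    Nat.ofDigits r (x :: l) = x + r * Nat.ofDigits r l := rfl

lemma ofDigits_concat' {R : Type*} [CommRing R] (r : R) (x : ℕ) (l : List ℕ) :
    Nat.ofDigits r (l ++ [x]) = Nat.ofDigits r l + r ^ l.length * x := by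
  induction l with
  | nil => simp [Nat.ofDigits]
  | cons a t ih => simp [ofDigits_cons', ih]; ring

lemma ofDigits_neg_one_palindrome_even {R : Type*} [CommRing R] (l : List ℕ)
    (hpal : List.Palindrome l) (hlen : Even l.length) :
    Nat.ofDigits (-1 : R) l = 0 := by
  induction hpal with
  | nil => simp [Nat.ofDigits]
  | singleton x => simp at hlen
  | cons_concat x hl ih =>
    rename_i l
    have hlen' : Even l.length := by
      simpa [Nat.even_add_one, parity_simps] using hlen
    rw [ofDigits_cons', ofDigits_concat', ih hlen']
    simp [hlen'.neg_one_pow]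

/-- If the base-`b` digit list of `2^n` is a palindrome with an even number of
digits, then `b = 2^x - 1` for some `x`. -/
theorem base_eq_pow_two_sub_one_of_palindrome_even_length (b n : ℕ) (hb : 2 ≤ b)
    (hpal : List.Palindrome (Nat.digits b (2 ^ n)))
    (hlen : Even (Nat.digits b (2 ^ n)).length) :
    ∃ x : ℕ, b = 2 ^ x - 1 := by
  have hdvd : (b + 1) ∣ 2 ^ n := by
    have h0 : ((2 ^ n : ℕ) : ZMod (b + 1)) = 0 := by
      conv_lhs => rw [← Nat.ofDigits_digits b (2 ^ n)]
      rw [Nat.coe_ofDigits]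
      have hb1 : ((b : ZMod (b + 1))) = -1 := by
        have : ((b + 1 : ℕ) : ZMod (b + 1)) = 0 := ZMod.natCast_self _
        push_cast at this
        linear_combination this
      rw [hb1]
      exact ofDigits_neg_one_palindrome_even _ hpal hlen
    exact (ZMod.natCast_eq_zero_iff _ _).mp h0
  obtain ⟨x, _, hx⟩ := (Nat.dvd_prime_pow Nat.prime_two).mp hdvd
  exact ⟨x, by omega⟩
end

section
/- Let p be a prime and let n ≥ 0, b ≥ 2 be integers. If the base-b digit list of p^n is a palindrome with an even number of digits, then b = p^x − 1 for some integer x. -/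
theorem succ_dvd_of_palindrome_even (b m : ℕ) (hb : 2 ≤ b)
    (hpal : List.Palindrome (Nat.digits b m))
    (hlen : Even (Nat.digits b m).length) : (b + 1) ∣ m := by
  have t := Nat.dvd_iff_dvd_ofDigits (b + 1) b (-1 : ℤ) (by push_cast; ring_nf; exact dvd_refl _) m
  rw [Nat.ofDigits_neg_one] at t
  refine t.2 ⟨0, ?_⟩
  let dig := (Nat.digits b m).map fun n : ℕ => (n : ℤ)
  replace hlen : Even dig.length := by rwa [List.length_map]
  have hz : dig.alternatingSum = 0 := by
    have := dig.alternatingSum_reverse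
    rw [(hpal.map _).reverse_eq, _root_.pow_succ', hlen.neg_one_pow, mul_one,
      neg_one_zsmul] at this
    exact eq_zero_of_neg_eq this.symm
  simpa [dig] using hz

/-- If `p` is prime and the base-`b` digit list of `p^n` is a palindrome with
an even number of digits, then `b = p^x - 1` for some `x`. -/
theorem base_eq_pow_prime_sub_one_of_palindrome_even_length (p b n : ℕ)
    (hp : p.Prime) (hb : 2 ≤ b)
    (hpal : List.Palindrome (Nat.digits b (p ^ n)))
    (hlen : Even (Nat.digits b (p ^ n)).length) :
    ∃ x : ℕ, b = p ^ x - 1 := by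
  have hd : (b + 1) ∣ p ^ n := succ_dvd_of_palindrome_even b (p ^ n) hb hpal hlen
  obtain ⟨x, _, hx⟩ := (Nat.dvd_prime_pow hp).mp hd
  exact ⟨x, by omega⟩
end

section
/- Let n ≥ 1, b ≥ 2 and α ≥ 1 be integers. Then 2^n has the 3-digit binomial-form representation α·(1,2,1)_b, i.e., 2^n = α·(1 + b)² with 2α ≤ b − 1, if and only if there exists an integer i ≥ 0 with α = 2^i, n ≡ i (mod 2), 3i + 2 < n, and b = 2^{(n−i)/2} − 1. -/
/-- `2^n` has the 3-digit binomial-form representation `α·(1,2,1)_b`, i.e.,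
`2^n = α(1+b)²` with `2α ≤ b - 1`, if and only if there is `i ≥ 0` with
`α = 2^i`, `n ≡ i (mod 2)`, `3i + 2 < n`, and `b = 2^((n-i)/2) - 1`. -/
theorem three_digit_binomial_form_iff (n b α : ℕ) (hn : 1 ≤ n) (hb : 2 ≤ b)
    (hα : 1 ≤ α) :
    (2 ^ n = α * (1 + b) ^ 2 ∧ 2 * α ≤ b - 1) ↔
      (∃ i : ℕ, α = 2 ^ i ∧ n % 2 = i % 2 ∧ 3 * i + 2 < n ∧
        b = 2 ^ ((n - i) / 2) - 1) := by
  constructor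
  · rintro ⟨h1, h2⟩
    have hdα : α ∣ 2 ^ n := ⟨(1 + b) ^ 2, h1⟩
    obtain ⟨i, hi, rfl⟩ := (Nat.dvd_prime_pow Nat.prime_two).mp hdα
    have hdb : (1 + b) ∣ 2 ^ n := by
      refine ⟨2 ^ i * (1 + b), ?_⟩
      rw [h1]; ring
    obtain ⟨j, hj, hbj⟩ := (Nat.dvd_prime_pow Nat.prime_two).mp hdb
    have hpow : 2 ^ n = 2 ^ (i + 2 * j) := by
      rw [h1, hbj]; ring
    have hnij : n = i + 2 * j :=
      Nat.pow_right_injective (le_refl 2) hpow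
    have h2j : 2 ≤ 2 ^ j := by omega
    have hij : i + 2 ≤ j := by
      have : 2 ^ (i + 1) + 2 ≤ 2 ^ j := by
        have : 2 * 2 ^ i = 2 ^ (i + 1) := by ring
        omega
      by_contra hc
      push_neg at hc
      have : 2 ^ j ≤ 2 ^ (i + 1) := Nat.pow_le_pow_right (by norm_num) (by omega)
      have h1lt : 1 ≤ 2 ^ (i + 1) := Nat.one_le_two_pow
      omega
    refine ⟨i, rfl, by omega, by omega, ?_⟩
    have : (n - i) / 2 = j := by omega
    rw [this]; omega
  · rintro ⟨i, rfl, hpar, hlt, rfl⟩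
    set k := (n - i) / 2 with hk
    have hnik : n = i + 2 * k := by omega
    have hik : i + 2 ≤ k := by omega
    have h1 : 2 ^ (i + 1) ≤ 2 ^ (k - 1) := Nat.pow_le_pow_right (by norm_num) (by omega)
    have h2 : 2 ≤ 2 ^ (k - 1) := by
      calc 2 = 2 ^ 1 := rfl
      _ ≤ 2 ^ (k - 1) := Nat.pow_le_pow_right (by norm_num) (by omega)
    have h3 : 2 ^ k = 2 ^ (k - 1) * 2 := by
      rw [← pow_succ]; congr 1; omega
    have h2k : 1 ≤ 2 ^ k := Nat.one_le_two_pow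
    constructor
    · have hb1 : 1 + (2 ^ k - 1) = 2 ^ k := by omega
      rw [hb1, hnik]; ring
    · have : 2 * 2 ^ i = 2 ^ (i + 1) := by ring
      omega
end

section
/- For every integer m ≥ 1, the central binomial coefficient satisfies C(2m, m) < 4^m / √(π·m). -/
open Real in
/-- For every integer `m ≥ 1`, `C(2m, m) < 4^m / √(π·m)`. -/
theorem centralBinom_lt (m : ℕ) (hm : 1 ≤ m) :
    (Nat.centralBinom m : ℝ) < 4 ^ m / Real.sqrt (π * m) := by
  have hm1 : (1 : ℝ) ≤ m := by exact_mod_cast hm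
  set c : ℝ := (Nat.centralBinom m : ℝ) with hc
  have hcpos : 0 < c := by rw [hc]; exact_mod_cast Nat.centralBinom_pos m
  have hnat : Nat.centralBinom m * (m.factorial * m.factorial) = (2 * m).factorial := by
    have := Nat.choose_mul_factorial_mul_factorial (show m ≤ 2 * m by omega)
    simpa [Nat.centralBinom, two_mul, mul_assoc] using this
  have hfact : c * ((m.factorial : ℝ) * m.factorial) = ((2 * m).factorial : ℝ) := by
    rw [hc]; exact_mod_cast hnat
  have hW := Real.Wallis.le_W m
  have hWeq := Real.Wallis.W_eq_factorial_ratio m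
  have hfpos : (0 : ℝ) < (m.factorial : ℝ) := by exact_mod_cast Nat.factorial_pos m
  have key : π * m * c ^ 2 < 16 ^ m := by
    have h1 : Real.Wallis.W m * (((2 * m).factorial : ℝ) ^ 2 * (2 * m + 1)) = 2 ^ (4 * m) * (m.factorial : ℝ) ^ 4 := by
      rw [hWeq]
      field_simp
    have h2 : ((2 * m).factorial : ℝ) ^ 2 = c ^ 2 * (m.factorial : ℝ) ^ 4 := by
      rw [← hfact]; ring
    have h3 : π * m < Real.Wallis.W m * (2 * m + 1) := by
      have hpi := Real.pi_pos
      have hd : (0:ℝ) < 2 * (2 * m + 2) := by positivity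
      have e : ((2*(m:ℝ)+1)/(2*m+2))*(π/2)*(2*m+1) = π*(2*m+1)^2/(2*(2*m+2)) := by
        field_simp
      have h3' : π * m < ((2*(m:ℝ)+1)/(2*m+2))*(π/2)*(2*m+1) := by
        rw [e, lt_div_iff₀ hd]; nlinarith
      exact lt_of_lt_of_le h3' (mul_le_mul_of_nonneg_right hW (by positivity))
    have h4 : Real.Wallis.W m * (2 * m + 1) * c ^ 2 = 2 ^ (4 * m) := by
      have h5 : Real.Wallis.W m * (c ^ 2 * (m.factorial : ℝ) ^ 4 * (2 * m + 1)) =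
          2 ^ (4 * m) * (m.factorial : ℝ) ^ 4 := by rw [← h2]; exact h1
      have hne : (m.factorial : ℝ) ^ 4 ≠ 0 := by positivity
      exact mul_right_cancel₀ hne (by linear_combination h5)
    have h16 : (16 : ℝ) ^ m = 2 ^ (4 * m) := by
      rw [pow_mul]; norm_num
    rw [h16, ← h4]
    exact mul_lt_mul_of_pos_right h3 (by positivity)
  have hpm : 0 < π * m := by positivity
  have hsq : Real.sqrt (π * m * c ^ 2) < Real.sqrt (16 ^ m) :=
    Real.sqrt_lt_sqrt (by positivity) key
  rw [Real.sqrt_mul hpm.le, Real.sqrt_sq hcpos.le] at hsq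
  have h16 : Real.sqrt ((16:ℝ) ^ m) = 4 ^ m := by
    rw [show (16:ℝ) ^ m = (4 ^ m) ^ 2 by rw [← pow_mul, show m * 2 = 2 * m from by ring, pow_mul]; norm_num]
    exact Real.sqrt_sq (by positivity)
  rw [h16] at hsq
  rw [lt_div_iff₀ (Real.sqrt_pos.mpr hpm)]
  linarith [hsq, mul_comm (Real.sqrt (π * m)) c]
end

section
/- For every integer k ≥ 1, the middle binomial coefficient satisfies C(k, ⌈k/2⌉) < 2^k / √π. -/
open Real in
lemma central_binom_lt_aux (m : ℕ) (hm : 1 ≤ m) :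
    (Nat.choose (2 * m) m : ℝ) ^ 2 < 16 ^ m / π := by
  have hπ : (0 : ℝ) < π := Real.pi_pos
  have hW := Real.Wallis.le_W m
  rw [Real.Wallis.W_eq_factorial_ratio] at hW
  set f : ℝ := (Nat.factorial m : ℝ) with hf_def
  set g : ℝ := (Nat.factorial (2 * m) : ℝ) with hg_def
  have hf : (0 : ℝ) < f := by positivity
  have hg : (0 : ℝ) < g := by positivity
  set c : ℝ := (Nat.choose (2 * m) m : ℝ) with hc_def
  have hc : c * f * f = g := by
    have := Nat.choose_mul_factorial_mul_factorial (Nat.le_mul_of_pos_left m (by norm_num) : m ≤ 2 * m)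
    have h2 : 2 * m - m = m := by omega
    rw [h2] at this
    rw [hc_def, hf_def, hg_def]
    exact_mod_cast this
  have hn : (1 : ℝ) ≤ (m : ℝ) := by exact_mod_cast hm
  have h16 : (2 : ℝ) ^ (4 * m) = 16 ^ m := by
    rw [pow_mul]; norm_num
  -- clear denominators in hW
  have hden : (0 : ℝ) < g ^ 2 * (2 * m + 1) := by positivity
  have key : ((2 : ℝ) * m + 1) * π * (g ^ 2 * (2 * m + 1)) ≤
      2 ^ (4 * m) * f ^ 4 * ((2 * m + 2) * 2) := by
    rw [div_mul_div_comm, div_le_div_iff₀ (by positivity) hden] at hW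
    linarith
  have hg2 : g ^ 2 = c ^ 2 * f ^ 4 := by rw [← hc]; ring
  rw [hg2, h16] at key
  rw [lt_div_iff₀ hπ]
  have hf4 : (0 : ℝ) < f ^ 4 := by positivity
  have key2 : ((2 : ℝ) * m + 1) * π * (c ^ 2 * (2 * m + 1)) ≤ 16 ^ m * ((2 * m + 2) * 2) := by
    have := (mul_le_mul_iff_left₀ hf4).mpr (le_refl (1 : ℝ))
    nlinarith [key, hf4, sq_nonneg c]
  have h16pos : (0 : ℝ) < 16 ^ m := by positivity
  have hA : ((2:ℝ) * m + 1) ^ 2 * (c ^ 2 * π) ≤ (4 * m + 4) * 16 ^ m := by nlinarith [key2]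
  have hB : ((4:ℝ) * m + 4) * 16 ^ m < (2 * m + 1) ^ 2 * 16 ^ m := by nlinarith [mul_pos h16pos (show (0:ℝ) < 4 * (m:ℝ) * (m:ℝ) - 3 by nlinarith [hn])]
  have hC : ((2:ℝ) * m + 1) ^ 2 * (c ^ 2 * π) < (2 * m + 1) ^ 2 * (16 ^ m) :=
    lt_of_le_of_lt hA hB
  exact lt_of_mul_lt_mul_left hC (by positivity)

open Real in
lemma central_binom_lt (m : ℕ) (hm : 1 ≤ m) :
    (Nat.choose (2 * m) m : ℝ) < 4 ^ m / Real.sqrt π := by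
  have hπ : (0 : ℝ) < π := Real.pi_pos
  have hs : (0 : ℝ) < Real.sqrt π := Real.sqrt_pos.mpr hπ
  have hrhs : (0 : ℝ) < 4 ^ m / Real.sqrt π := by positivity
  refine lt_of_pow_lt_pow_left₀ 2 hrhs.le ?_
  have hsq : (4 ^ m / Real.sqrt π : ℝ) ^ 2 = 16 ^ m / π := by
    rw [div_pow, Real.sq_sqrt hπ.le]
    congr 1
    rw [← pow_mul, pow_mul']
    norm_num
  rw [hsq]
  exact central_binom_lt_aux m hm

open Real in
/-- For every integer `k ≥ 1`, `C(k, ⌈k/2⌉) < 2^k / √π`. -/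
theorem middle_binom_lt (k : ℕ) (hk : 1 ≤ k) :
    (Nat.choose k ((k + 1) / 2) : ℝ) < 2 ^ k / Real.sqrt π := by
  have hπ : (0 : ℝ) < π := Real.pi_pos
  have hs : (0 : ℝ) < Real.sqrt π := Real.sqrt_pos.mpr hπ
  rcases Nat.even_or_odd k with ⟨m, hme⟩ | ⟨m, hmo⟩
  · -- k = 2m
    have hm : 1 ≤ m := by omega
    have h1 : (k + 1) / 2 = m := by omega
    have h2 : k = 2 * m := by omega
    rw [h1, h2]
    calc (Nat.choose (2 * m) m : ℝ) < 4 ^ m / Real.sqrt π := central_binom_lt m hm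
      _ = 2 ^ (2 * m) / Real.sqrt π := by rw [pow_mul]; norm_num
  · -- k = 2m + 1
    have h1 : (k + 1) / 2 = m + 1 := by omega
    have h2 : k = 2 * m + 1 := by omega
    rw [h1, h2]
    have hch : 2 * Nat.choose (2 * m + 1) (m + 1) = Nat.choose (2 * (m + 1)) (m + 1) := by
      have := Nat.choose_symm_half m
      have hsucc := Nat.choose_succ_succ (2 * m + 1) m
      have h2m : 2 * (m + 1) = (2 * m + 1) + 1 := by ring
      rw [h2m, hsucc, ← this]
      ring
    have : (Nat.choose (2 * m + 1) (m + 1) : ℝ)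
        = (Nat.choose (2 * (m + 1)) (m + 1) : ℝ) / 2 := by
      rw [← hch]; push_cast; ring
    rw [this, div_lt_iff₀ (by norm_num : (0:ℝ) < 2)]
    have h4 : (4:ℝ) ^ (m + 1) = 2 ^ (2 * m + 1) * 2 := by
      rw [show (4:ℝ) = 2 ^ 2 by norm_num, ← pow_mul, ← pow_succ]
      congr 1 <;> omega
    calc (Nat.choose (2 * (m + 1)) (m + 1) : ℝ)
        < 4 ^ (m + 1) / Real.sqrt π := central_binom_lt (m + 1) (by omega)
      _ = 2 ^ (2 * m + 1) / Real.sqrt π * 2 := by rw [h4]; ring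
end
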